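/- arXiv:2603.14359 — 3 statements merged into one kernel-verified Lean document; each statement's English description precedes it below -/
import Mathlib

section
/- Let G be a group and μ a finitely additive, conjugation-invariant probability measure on G \ {1}. Define N = {g ∈ G : μ(C_G(g) \ {1}) = 1} ∪ {1}, where C_G(g) is the centralizer of g in G. Then N is a normal subgroup of G. -/
open Filter Topology

/-- A finitely additive conjugation-invariant probability measure (mean)
on `G \ {1}`. -/
structure ConjInvMean (G : Type*) [Group G] where
  μ : Set G → ℝ
  nonneg : ∀ A : Set G, A ⊆ {g : G | g ≠ 1} → 0 ≤ μ A
  total : μ {g : G | g ≠ 1} = 1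
  additive : ∀ A B : Set G, A ⊆ {g : G | g ≠ 1} → B ⊆ {g : G | g ≠ 1} →
    Disjoint A B → μ (A ∪ B) = μ A + μ B
  conj_inv : ∀ (g : G) (A : Set G), A ⊆ {h : G | h ≠ 1} →
    μ ((fun x => g * x * g⁻¹) '' A) = μ A

/-- The set `N = {g : μ(C_G(g) \ {1}) = 1} ∪ {1}`. -/
def Nset {G : Type*} [Group G] (m : ConjInvMean G) : Set G :=
  {g : G | m.μ ((Subgroup.centralizer {g} : Set G) \ {1}) = 1} ∪ {1}

section Aux

variable {G : Type*} [Group G] (m : ConjInvMean G)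

lemma mu_mono {A B : Set G} (hB : B ⊆ {g : G | g ≠ 1}) (hAB : A ⊆ B) :
    m.μ A ≤ m.μ B := by
  have hA : A ⊆ {g : G | g ≠ 1} := hAB.trans hB
  have h1 : A ∪ (B \ A) = B := Set.union_diff_cancel hAB
  have h2 : m.μ (A ∪ (B \ A)) = m.μ A + m.μ (B \ A) :=
    m.additive _ _ hA (Set.diff_subset.trans hB) Set.disjoint_sdiff_right
  have h3 := m.nonneg (B \ A) (Set.diff_subset.trans hB)
  rw [h1] at h2
  linarith

lemma mu_le_one {A : Set G} (hA : A ⊆ {g : G | g ≠ 1}) : m.μ A ≤ 1 := by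
  have := mu_mono m (Set.Subset.refl {g : G | g ≠ 1}) hA
  rwa [m.total] at this

lemma mu_inter_one {A B : Set G} (hA : A ⊆ {g : G | g ≠ 1}) (hB : B ⊆ {g : G | g ≠ 1})
    (h1 : m.μ A = 1) (h2 : m.μ B = 1) : m.μ (A ∩ B) = 1 := by
  have hBA : B \ A ⊆ {g : G | g ≠ 1} := Set.diff_subset.trans hB
  have hadd : m.μ (A ∪ (B \ A)) = m.μ A + m.μ (B \ A) :=
    m.additive _ _ hA hBA Set.disjoint_sdiff_right
  have hle : m.μ (A ∪ (B \ A)) ≤ 1 := mu_le_one m (Set.union_subset hA hBA)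
  have h0 : m.μ (B \ A) = 0 :=
    le_antisymm (by linarith) (m.nonneg _ hBA)
  have hsplit : (B ∩ A) ∪ (B \ A) = B := Set.inter_union_diff B A
  have hadd2 : m.μ ((B ∩ A) ∪ (B \ A)) = m.μ (B ∩ A) + m.μ (B \ A) :=
    m.additive _ _ ((Set.inter_subset_left).trans hB) hBA
      (Set.disjoint_sdiff_right.mono_left Set.inter_subset_right)
  rw [hsplit] at hadd2
  rw [Set.inter_comm]
  linarith

lemma cent_diff_subset (g : G) :
    ((Subgroup.centralizer {g} : Set G) \ {1}) ⊆ {h : G | h ≠ 1} := by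
  intro x hx
  simpa using hx.2

end Aux

/-- `N = {g : μ(C_G(g) \ {1}) = 1} ∪ {1}` is a normal subgroup of `G`. -/
theorem stmt_1 {G : Type*} [Group G] (m : ConjInvMean G) :
    ∃ N : Subgroup G, N.Normal ∧ (N : Set G) = Nset m := by
  have memN : ∀ g : G, g ∈ Nset m ↔
      m.μ ((Subgroup.centralizer {g} : Set G) \ {1}) = 1 ∨ g = 1 := by
    intro g; simp [Nset]; tauto
  refine ⟨{ carrier := Nset m
            one_mem' := by rw [memN]; exact Or.inr rfl
            mul_mem' := ?_
            inv_mem' := ?_ }, ⟨?_⟩, rfl⟩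
  · intro a b ha hb
    rw [memN] at ha hb ⊢
    rcases ha with ha | rfl
    · rcases hb with hb | rfl
      · left
        have hsub : ((Subgroup.centralizer {a} : Set G) \ {1}) ∩
            ((Subgroup.centralizer {b} : Set G) \ {1}) ⊆
            ((Subgroup.centralizer {a * b} : Set G) \ {1}) := by
          rintro x ⟨⟨hxa, hx1⟩, ⟨hxb, _⟩⟩
          refine ⟨?_, hx1⟩
          rw [SetLike.mem_coe, Subgroup.mem_centralizer_singleton_iff] at hxa hxb ⊢
          calc x * (a * b) = (x * a) * b := by group
            _ = (a * x) * b := by rw [hxa]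
            _ = a * (x * b) := by group
            _ = a * (b * x) := by rw [hxb]
            _ = (a * b) * x := by group
        have hi := mu_inter_one m (cent_diff_subset a) (cent_diff_subset b) ha hb
        have hle := mu_mono m (cent_diff_subset (a * b)) hsub
        have := mu_le_one m (cent_diff_subset (a * b))
        linarith [hi ▸ hle]
      · left; simpa using ha
    · simpa using hb
  · intro a ha
    rw [memN] at ha ⊢
    rcases ha with ha | rfl
    · left
      have : Subgroup.centralizer ({a⁻¹} : Set G) = Subgroup.centralizer {a} := by
        ext x
        simp only [Subgroup.mem_centralizer_singleton_iff]
        constructor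
        · intro h
          have h' : Commute x a⁻¹ := h
          simpa using h'.inv_right.eq
        · intro h
          have h' : Commute x a := h
          exact h'.inv_right.eq
      rw [this]; exact ha
    · right; simp
  · intro a ha k
    simp only [Subgroup.mem_mk] at ha ⊢
    change a ∈ Nset m at ha
    change k * a * k⁻¹ ∈ Nset m
    rw [memN] at ha ⊢
    rcases ha with ha | rfl
    · left
      have himg : (fun x => k * x * k⁻¹) '' ((Subgroup.centralizer {a} : Set G) \ {1}) =
          (Subgroup.centralizer {k * a * k⁻¹} : Set G) \ {1} := by
        ext x
        constructor
        · rintro ⟨y, ⟨hy, hy1⟩, rfl⟩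
          rw [SetLike.mem_coe, Subgroup.mem_centralizer_singleton_iff] at hy
          constructor
          · rw [SetLike.mem_coe, Subgroup.mem_centralizer_singleton_iff]
            show (k * y * k⁻¹) * (k * a * k⁻¹) = (k * a * k⁻¹) * (k * y * k⁻¹)
            calc (k * y * k⁻¹) * (k * a * k⁻¹) = k * (y * a) * k⁻¹ := by group
              _ = k * (a * y) * k⁻¹ := by rw [hy]
              _ = (k * a * k⁻¹) * (k * y * k⁻¹) := by group
          · simp only [Set.mem_singleton_iff] at hy1 ⊢
            intro h
            apply hy1
            have := congrArg (fun z => k⁻¹ * z * k) h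
            simpa [mul_assoc] using this
        · rintro ⟨hx, hx1⟩
          refine ⟨k⁻¹ * x * k, ⟨?_, ?_⟩, by group⟩
          · rw [SetLike.mem_coe, Subgroup.mem_centralizer_singleton_iff] at hx ⊢
            calc (k⁻¹ * x * k) * a = k⁻¹ * (x * (k * a * k⁻¹)) * k := by group
              _ = k⁻¹ * ((k * a * k⁻¹) * x) * k := by rw [hx]
              _ = a * (k⁻¹ * x * k) := by group
          · simp only [Set.mem_singleton_iff] at hx1 ⊢
            intro h
            apply hx1
            have := congrArg (fun z => k * z * k⁻¹) h
            simpa [mul_assoc] using this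
      have := m.conj_inv k _ (cent_diff_subset a)
      rw [himg] at this
      rw [this]; exact ha
    · right; simp
end

section
/- Every infinite amenable group is inner amenable: if G is an infinite amenable group, then the conjugation action of G on G \ {1} admits an invariant mean. -/
open Filter Topology

/-- A left-translation-invariant finitely additive probability measure on `G`. -/
structure LeftInvMean (G : Type*) [Group G] where
  μ : Set G → ℝ
  nonneg : ∀ A : Set G, 0 ≤ μ A
  total : μ Set.univ = 1
  additive : ∀ A B : Set G, Disjoint A B → μ (A ∪ B) = μ A + μ B
  left_inv : ∀ (g : G) (A : Set G), μ ((fun x => g * x) '' A) = μ A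

namespace InnerAux

open scoped Classical

variable {G : Type*} [Group G] (m : LeftInvMean G)

lemma m_empty : m.μ ∅ = 0 := by
  have h := m.additive ∅ ∅ (by simp)
  simp at h; linarith

lemma m_mono {A B : Set G} (h : A ⊆ B) : m.μ A ≤ m.μ B := by
  have h2 := m.additive A (B \ A) disjoint_sdiff_self_right
  rw [Set.union_diff_cancel h] at h2
  have := m.nonneg (B \ A); linarith

lemma m_le_one (A : Set G) : m.μ A ≤ 1 := by
  have := m_mono m (Set.subset_univ A); rwa [m.total] at this

lemma m_pre (g : G) (A : Set G) : m.μ ((fun x => g * x) ⁻¹' A) = m.μ A := by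
  have h : (fun x => g⁻¹ * x) '' A = (fun x => g * x) ⁻¹' A := by
    ext x
    constructor
    · rintro ⟨a, ha, rfl⟩; simpa [mul_inv_cancel_left] using ha
    · intro hx; exact ⟨g * x, hx, by simp [inv_mul_cancel_left]⟩
  rw [← h, m.left_inv]

lemma m_finsum {ι : Type*} [DecidableEq ι] (s : Finset ι) (A : ι → Set G)
    (hd : ∀ i ∈ s, ∀ j ∈ s, i ≠ j → Disjoint (A i) (A j)) :
    m.μ (⋃ i ∈ s, A i) = ∑ i ∈ s, m.μ (A i) := by
  induction s using Finset.induction_on with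
  | empty => simp [m_empty]
  | @insert a s ha ih =>
    have hdisj : Disjoint (A a) (⋃ i ∈ s, A i) := by
      rw [Set.disjoint_iUnion₂_right]
      intro i hi
      exact hd a (Finset.mem_insert_self a s) i (Finset.mem_insert_of_mem hi)
        (by rintro rfl; exact ha hi)
    rw [Finset.set_biUnion_insert, m.additive _ _ hdisj, Finset.sum_insert ha,
      ih fun i hi j hj hij => hd i (Finset.mem_insert_of_mem hi) j (Finset.mem_insert_of_mem hj) hij]

lemma m_singleton [Infinite G] (g : G) : m.μ {g} = 0 := by
  have hg : ∀ g : G, m.μ {g} = m.μ {(1 : G)} := by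
    intro g
    have h1 : (fun x => g * x) ⁻¹' ({g} : Set G) = {(1 : G)} := by
      ext x; simp [mul_eq_left]
    have := m_pre m g ({g} : Set G)
    rw [h1] at this; exact this.symm
  rw [hg]
  by_contra h
  have hpos : 0 < m.μ {(1 : G)} := lt_of_le_of_ne (m.nonneg _) (Ne.symm h)
  obtain ⟨n, hn⟩ := exists_nat_gt (1 / m.μ {(1 : G)})
  set e := Infinite.natEmbedding G
  have hsum : m.μ (⋃ i ∈ Finset.range n, ({e i} : Set G)) = n * m.μ {(1 : G)} := by
    rw [m_finsum m (Finset.range n) (fun i => ({e i} : Set G))]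
    · simp [hg, Finset.sum_const, mul_comm]
    · intro i _ j _ hij
      simp [Set.disjoint_singleton_left, e.injective.ne hij]
  have hle : (n : ℝ) * m.μ {(1 : G)} ≤ 1 := by
    rw [← hsum]; exact m_le_one m _
  rw [div_lt_iff₀ hpos] at hn
  linarith

/-- `F A g = m(A g)`, the measure of the right translate. -/
def F (A : Set G) (g : G) : ℝ := m.μ {x | x * g⁻¹ ∈ A}

lemma F_nonneg (A : Set G) (g : G) : 0 ≤ F m A g := m.nonneg _
lemma F_le_one (A : Set G) (g : G) : F m A g ≤ 1 := m_le_one m _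

lemma F_add {A B : Set G} (hd : Disjoint A B) (g : G) :
    F m (A ∪ B) g = F m A g + F m B g := by
  have : {x : G | x * g⁻¹ ∈ A ∪ B} = {x | x * g⁻¹ ∈ A} ∪ {x | x * g⁻¹ ∈ B} := by
    ext x; simp [Set.mem_union]
  rw [F, this, m.additive]
  · rfl
  · exact Set.disjoint_left.mpr fun x hx hx' =>
      Set.disjoint_left.mp hd hx hx'

lemma F_conj (h : G) (A : Set G) (g : G) :
    F m ((fun x => h * x * h⁻¹) '' A) g = F m A (h⁻¹ * g) := by
  have himg : (fun x => h * x * h⁻¹) '' A = {y | h⁻¹ * y * h ∈ A} := by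
    ext y
    constructor
    · rintro ⟨a, ha, rfl⟩; simpa [mul_assoc] using ha
    · intro hy; exact ⟨h⁻¹ * y * h, hy, by group⟩
  have hset : {x : G | x * g⁻¹ ∈ (fun x => h * x * h⁻¹) '' A}
      = (fun x => h⁻¹ * x) ⁻¹' {y | y * (h⁻¹ * g)⁻¹ ∈ A} := by
    rw [himg]
    ext x
    simp only [Set.mem_setOf_eq, Set.mem_preimage]
    have key : ∀ x : G, h⁻¹ * (x * g⁻¹) * h = (h⁻¹ * x) * (h⁻¹ * g)⁻¹ := by
      intro x; group
    constructor
    · intro hx; show (h⁻¹ * x) * (h⁻¹ * g)⁻¹ ∈ A; rw [← key]; exact hx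
    · intro hx; show h⁻¹ * (x * g⁻¹) * h ∈ A; rw [key]; exact hx
  rw [F, hset, m_pre]; rfl

/-- discretized level count -/
noncomputable def lc (u : G → ℝ) (n : ℕ) (g : G) : ℕ := min n ⌈(n : ℝ) * u g⌉₊

def J (h : G → ℕ) (M : ℕ) : ℝ := ∑ k ∈ Finset.range M, m.μ {g | k < h g}

def T (u : G → ℝ) (n : ℕ) : ℝ := ∑ k ∈ Finset.range n, m.μ {g | (k : ℝ) / n < u g}

lemma level_eq (u : G → ℝ) {n k : ℕ} (hn : 0 < n) (hk : k < n) :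
    {g : G | (k : ℝ) / n < u g} = {g | k < lc u n g} := by
  ext g
  have hn' : (0 : ℝ) < n := by exact_mod_cast hn
  simp only [Set.mem_setOf_eq, lc, lt_min_iff, hk, true_and, Nat.lt_ceil,
    div_lt_iff₀ hn', mul_comm]

lemma lc_le (u : G → ℝ) (n : ℕ) (g : G) : lc u n g ≤ n := min_le_left _ _

lemma T_eq_J (u : G → ℝ) {n M : ℕ} (hn : 0 < n) (hM : n ≤ M) :
    T m u n = J m (lc u n) M := by
  rw [T, J]
  have h1 : ∑ k ∈ Finset.range n, m.μ {g | (k : ℝ) / n < u g}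
      = ∑ k ∈ Finset.range n, m.μ {g | k < lc u n g} :=
    Finset.sum_congr rfl fun k hk => by rw [level_eq u hn (Finset.mem_range.mp hk)]
  rw [h1]
  refine Finset.sum_subset (Finset.range_subset_range.mpr hM) ?_
  intro k _ hk
  have hkn : n ≤ k := by simpa using hk
  have hemp : {g : G | k < lc u n g} = ∅ := by
    ext g; simp only [Set.mem_setOf_eq, Set.mem_empty_iff_false, iff_false, not_lt]
    exact le_trans (lc_le u n g) hkn
  rw [hemp, m_empty]

lemma J_mono {h₁ h₂ : G → ℕ} (M : ℕ) (hle : ∀ g, h₁ g ≤ h₂ g) :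
    J m h₁ M ≤ J m h₂ M :=
  Finset.sum_le_sum fun k _ => m_mono m fun g hg => lt_of_lt_of_le hg (hle g)

lemma J_indicator (h : G → ℕ) (E : Set G) (M : ℕ) (hb : ∀ g, h g < M) :
    J m (fun g => h g + E.indicator (fun _ => 1) g) M = J m h M + m.μ E := by
  have hterm : ∀ k : ℕ,
      m.μ {g | k < h g + E.indicator (fun _ => 1) g}
        = m.μ {g | k < h g} + m.μ (E ∩ {g | h g = k}) := by
    intro k
    have hset : {g : G | k < h g + E.indicator (fun _ => 1) g}
        = {g | k < h g} ∪ (E ∩ {g | h g = k}) := by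
      ext g
      by_cases hE : g ∈ E
      · simp only [Set.mem_setOf_eq, Set.mem_union, Set.mem_inter_iff,
          Set.indicator_of_mem hE, hE, true_and]
        omega
      · simp only [Set.mem_setOf_eq, Set.mem_union, Set.mem_inter_iff,
          Set.indicator_of_notMem hE, hE, false_and, or_false]
        omega
    rw [hset, m.additive]
    exact Set.disjoint_left.mpr fun g hg hg' => by
      simp only [Set.mem_setOf_eq] at hg
      have := hg'.2; simp only [Set.mem_setOf_eq] at this; omega
  rw [J, J]
  simp only [hterm]
  rw [Finset.sum_add_distrib]
  congr 1
  rw [← m_finsum m (Finset.range M) (fun k => E ∩ {g | h g = k})]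
  · congr 1
    ext g
    simp only [Set.mem_iUnion, Set.mem_inter_iff, Set.mem_setOf_eq, Finset.mem_range]
    constructor
    · rintro ⟨k, _, hgE, _⟩; exact hgE
    · intro hgE; exact ⟨h g, hb g, hgE, rfl⟩
  · intro i _ j _ hij
    exact Set.disjoint_left.mpr fun g hg hg' => hij (hg.2.symm.trans hg'.2)

lemma J_add (M : ℕ) : ∀ (K : ℕ) (h₁ h₂ : G → ℕ), (∀ g, h₂ g ≤ K) →
    (∀ g, h₁ g + h₂ g < M) →
    J m (fun g => h₁ g + h₂ g) M = J m h₁ M + J m h₂ M := by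
  intro K
  induction K with
  | zero =>
    intro h₁ h₂ hK hb
    have hz : ∀ g, h₂ g = 0 := fun g => Nat.le_zero.mp (hK g)
    have h0 : J m h₂ M = 0 := by
      rw [J]
      have : ∀ k ∈ Finset.range M, m.μ {g | k < h₂ g} = 0 := by
        intro k _
        have : {g : G | k < h₂ g} = ∅ := by ext g; simp [hz g]
        rw [this, m_empty]
      rw [Finset.sum_congr rfl this]; simp
    rw [h0]
    simp only [hz, add_zero]
  | succ K ih =>
    intro h₁ h₂ hK hb
    set h₂' : G → ℕ := fun g => min (h₂ g) K with hh₂'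
    set E : Set G := {g | h₂ g = K + 1} with hE
    have hsplit : ∀ g, h₂ g = h₂' g + E.indicator (fun _ => 1) g := by
      intro g
      by_cases hg : g ∈ E
      · have hg' : h₂ g = K + 1 := hg
        simp [hh₂', Set.indicator_of_mem hg, hg']
      · have hg' : ¬ h₂ g = K + 1 := hg
        have := hK g
        simp [hh₂', Set.indicator_of_notMem hg]; omega
    have h₂'K : ∀ g, h₂' g ≤ K := fun g => min_le_right _ _
    have hb' : ∀ g, h₁ g + h₂' g < M := fun g =>
      lt_of_le_of_lt (by have := hsplit g; omega) (hb g)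
    have step1 : J m (fun g => h₁ g + h₂ g) M
        = J m (fun g => h₁ g + h₂' g) M + m.μ E := by
      rw [← J_indicator m (fun g => h₁ g + h₂' g) E M hb']
      congr 1
      funext g
      have := hsplit g; omega
    have step2 : J m h₂ M = J m h₂' M + m.μ E := by
      have hb'' : ∀ g, h₂' g < M := fun g =>
        lt_of_le_of_lt (le_trans (min_le_left _ _) (Nat.le_add_left _ _)) (hb g)
      rw [← J_indicator m h₂' E M hb'']
      congr 1
      funext g
      exact hsplit g
    rw [step1, ih h₁ h₂' h₂'K hb', step2]
    ring


lemma lc_subadd (u v : G → ℝ) (n : ℕ)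
    (hu : ∀ g, 0 ≤ u g) (hv : ∀ g, 0 ≤ v g) (huv : ∀ g, u g + v g ≤ 1) (g : G) :
    lc (fun g => u g + v g) n g ≤ lc u n g + lc v n g ∧
      lc u n g + lc v n g ≤ lc (fun g => u g + v g) n g + 1 := by
  have hn0 : (0:ℝ) ≤ n := Nat.cast_nonneg n
  have hu' : (0:ℝ) ≤ (n:ℝ) * u g := mul_nonneg hn0 (hu g)
  have hv' : (0:ℝ) ≤ (n:ℝ) * v g := mul_nonneg hn0 (hv g)
  have hc1 : ⌈(n:ℝ) * (u g + v g)⌉₊ ≤ ⌈(n:ℝ) * u g⌉₊ + ⌈(n:ℝ) * v g⌉₊ := by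
    rw [mul_add]; exact Nat.ceil_add_le _ _
  have hcn : ⌈(n:ℝ) * (u g + v g)⌉₊ ≤ n := by
    apply Nat.ceil_le.mpr
    calc (n:ℝ) * (u g + v g) ≤ (n:ℝ) * 1 := by
          apply mul_le_mul_of_nonneg_left (huv g) hn0
      _ = n := mul_one _
  have hc2 : ⌈(n:ℝ) * u g⌉₊ + ⌈(n:ℝ) * v g⌉₊ ≤ ⌈(n:ℝ) * (u g + v g)⌉₊ + 1 := by
    have f1 : ⌈(n:ℝ) * u g⌉₊ ≤ ⌊(n:ℝ) * u g⌋₊ + 1 := Nat.ceil_le_floor_add_one _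
    have f2 : ⌈(n:ℝ) * v g + (⌊(n:ℝ) * u g⌋₊ : ℕ)⌉₊ = ⌈(n:ℝ) * v g⌉₊ + ⌊(n:ℝ) * u g⌋₊ :=
      Nat.ceil_add_natCast hv' _
    have f3 : ⌈(n:ℝ) * v g + (⌊(n:ℝ) * u g⌋₊ : ℕ)⌉₊ ≤ ⌈(n:ℝ) * (u g + v g)⌉₊ := by
      apply Nat.ceil_le_ceil
      have := Nat.floor_le hu'
      push_cast
      rw [mul_add]
      linarith
    omega
  unfold lc
  simp only []
  omega

lemma T_nonneg (u : G → ℝ) (n : ℕ) : 0 ≤ T m u n :=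
  Finset.sum_nonneg fun k _ => m.nonneg _

lemma T_le (u : G → ℝ) (n : ℕ) : T m u n ≤ n := by
  calc T m u n ≤ ∑ _k ∈ Finset.range n, (1:ℝ) :=
        Finset.sum_le_sum fun k _ => m_le_one m _
    _ = n := by simp

lemma T_union (A B : Set G) (hd : Disjoint A B) {n : ℕ} (hn : 0 < n) :
    T m (F m (A ∪ B)) n ≤ T m (F m A) n + T m (F m B) n ∧
      T m (F m A) n + T m (F m B) n ≤ T m (F m (A ∪ B)) n + 1 := by
  set u := F m A with hu
  set v := F m B with hv
  have hFu : F m (A ∪ B) = fun g => u g + v g := funext fun g => F_add m hd g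
  set M := 2 * n + 1 with hMdef
  have hM : n ≤ M := by omega
  have hu0 : ∀ g, 0 ≤ u g := F_nonneg m A
  have hv0 : ∀ g, 0 ≤ v g := F_nonneg m B
  have huv1 : ∀ g, u g + v g ≤ 1 := by
    intro g; rw [← F_add m hd g]; exact F_le_one m _ g
  have hsub := fun g => lc_subadd u v n hu0 hv0 huv1 g
  have e0 : T m (F m (A ∪ B)) n = J m (lc (fun g => u g + v g) n) M := by
    rw [hFu]; exact T_eq_J m _ hn hM
  have e1 : T m u n = J m (lc u n) M := T_eq_J m _ hn hM
  have e2 : T m v n = J m (lc v n) M := T_eq_J m _ hn hM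
  have eadd : J m (fun g => lc u n g + lc v n g) M = J m (lc u n) M + J m (lc v n) M := by
    apply J_add m M n (lc u n) (lc v n) (fun g => lc_le v n g)
    intro g
    have := lc_le u n g; have := lc_le v n g; omega
  constructor
  · rw [e0, e1, e2, ← eadd]
    exact J_mono m M fun g => (hsub g).1
  · rw [e0, e1, e2, ← eadd]
    have hstep : J m (fun g => lc (fun g => u g + v g) n g
          + (Set.univ : Set G).indicator (fun _ => 1) g) M
        = J m (lc (fun g => u g + v g) n) M + m.μ Set.univ := by
      apply J_indicator
      intro g
      have := lc_le (fun g => u g + v g) n g; omega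
    have hmono : J m (fun g => lc u n g + lc v n g) M
        ≤ J m (fun g => lc (fun g => u g + v g) n g
            + (Set.univ : Set G).indicator (fun _ => 1) g) M := by
      apply J_mono
      intro g
      have := (hsub g).2
      simp only [Set.indicator_univ]
      omega
    rw [m.total] at hstep
    linarith

lemma T_conj (h : G) (A : Set G) (n : ℕ) :
    T m (F m ((fun x => h * x * h⁻¹) '' A)) n = T m (F m A) n := by
  unfold T
  refine Finset.sum_congr rfl fun k _ => ?_
  have hset : {g : G | (k:ℝ)/n < F m ((fun x => h * x * h⁻¹) '' A) g}
      = (fun g => h⁻¹ * g) ⁻¹' {y | (k:ℝ)/n < F m A y} := by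
    ext g
    simp only [Set.mem_setOf_eq, Set.mem_preimage, F_conj m h A g]
  rw [hset, m_pre]

lemma F_coOne [Infinite G] (g : G) : F m {x : G | x ≠ 1} g = 1 := by
  have hset : {x : G | x * g⁻¹ ∈ {x : G | x ≠ 1}} = ({g} : Set G)ᶜ := by
    ext x
    simp [mul_inv_eq_one]
  have hadd := m.additive {g} ({g} : Set G)ᶜ disjoint_compl_right
  rw [Set.union_compl_self, m.total, m_singleton m g] at hadd
  rw [F, hset]
  linarith

lemma T_total [Infinite G] {n : ℕ} (hn : 0 < n) : T m (F m {x : G | x ≠ 1}) n = n := by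
  unfold T
  have hterm : ∀ k ∈ Finset.range n, m.μ {g : G | (k:ℝ)/n < F m {x : G | x ≠ 1} g} = 1 := by
    intro k hk
    have hkn : (k:ℝ) < n := by exact_mod_cast Finset.mem_range.mp hk
    have hn' : (0:ℝ) < n := by positivity
    have : {g : G | (k:ℝ)/n < F m {x : G | x ≠ 1} g} = Set.univ := by
      ext g
      simp only [Set.mem_setOf_eq, Set.mem_univ, iff_true, F_coOne m g]
      rw [div_lt_one hn']
      exact hkn
    rw [this, m.total]
  rw [Finset.sum_congr rfl hterm]
  simp

end InnerAux

/-- Every infinite amenable group is inner amenable. -/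
theorem stmt_8 {G : Type*} [Group G] (hinf : Infinite G)
    (ham : Nonempty (LeftInvMean G)) :
    Nonempty (ConjInvMean G) := by
  classical
  obtain ⟨m⟩ := ham
  open InnerAux in
  set U : Ultrafilter ℕ := Ultrafilter.of atTop with hUdef
  have hU : (U : Filter ℕ) ≤ atTop := Ultrafilter.of_le _
  set S : Set G → ℕ → ℝ := fun A n => InnerAux.T m (InnerAux.F m A) (n+1) / (n+1)
    with hSdef
  have hpos : ∀ n : ℕ, (0:ℝ) < (n:ℕ) + 1 := fun n => by positivity
  have hSmem : ∀ A n, S A n ∈ Set.Icc (0:ℝ) 1 := by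
    intro A n
    constructor
    · exact div_nonneg (InnerAux.T_nonneg m _ _) (le_of_lt (hpos n))
    · rw [div_le_one (hpos n)]
      have := InnerAux.T_le m (InnerAux.F m A) (n+1)
      push_cast at this ⊢
      linarith
  have hex : ∀ A : Set G, ∃ x ∈ Set.Icc (0:ℝ) 1, Tendsto (S A) (U : Filter ℕ) (𝓝 x) := by
    intro A
    have hle : (↑(U.map (S A)) : Filter ℝ) ≤ 𝓟 (Set.Icc (0:ℝ) 1) := by
      rw [Filter.le_principal_iff]
      exact Filter.mem_map.mpr (Filter.univ_mem' fun n => hSmem A n)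
    obtain ⟨x, hxIcc, hx⟩ := isCompact_Icc.ultrafilter_le_nhds (U.map (S A)) hle
    refine ⟨x, hxIcc, ?_⟩
    rwa [Ultrafilter.coe_map] at hx
  choose μf hμmem hμtend using hex
  have herr : Tendsto (fun n : ℕ => 1 / ((n:ℝ) + 1)) (U : Filter ℕ) (𝓝 0) :=
    tendsto_one_div_add_atTop_nhds_zero_nat.mono_left hU
  refine ⟨⟨μf, ?_, ?_, ?_, ?_⟩⟩
  · intro A _
    exact (hμmem A).1
  · -- total
    have hconst : S {g : G | g ≠ 1} = fun _ => (1:ℝ) := by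
      funext n
      rw [hSdef]
      simp only
      rw [InnerAux.T_total m (Nat.succ_pos n)]
      push_cast
      rw [div_self]
      positivity
    have h1 : Tendsto (S {g : G | g ≠ 1}) (U : Filter ℕ) (𝓝 1) := by
      rw [hconst]; exact tendsto_const_nhds
    exact tendsto_nhds_unique (hμtend _) h1
  · -- additive
    intro A B _ _ hd
    have hTU := fun n : ℕ => InnerAux.T_union m A B hd (Nat.succ_pos n)
    have hineq1 : ∀ n, S (A ∪ B) n ≤ S A n + S B n := by
      intro n
      rw [hSdef]
      simp only
      rw [← add_div]
      exact (div_le_div_iff_of_pos_right (hpos n)).mpr (hTU n).1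
    have hineq2 : ∀ n, S A n + S B n ≤ S (A ∪ B) n + 1 / ((n:ℝ) + 1) := by
      intro n
      rw [hSdef]
      simp only
      rw [← add_div, ← add_div]
      exact (div_le_div_iff_of_pos_right (hpos n)).mpr (hTU n).2
    have l1 : μf (A ∪ B) ≤ μf A + μf B :=
      le_of_tendsto_of_tendsto' (hμtend (A ∪ B)) ((hμtend A).add (hμtend B)) hineq1
    have l2 : μf A + μf B ≤ μf (A ∪ B) + 0 :=
      le_of_tendsto_of_tendsto' ((hμtend A).add (hμtend B)) ((hμtend (A ∪ B)).add herr)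
        hineq2
    linarith
  · -- conj invariance
    intro g A _
    have hSeq : S ((fun x => g * x * g⁻¹) '' A) = S A := by
      funext n
      rw [hSdef]
      simp only
      rw [InnerAux.T_conj]
    have := hμtend ((fun x => g * x * g⁻¹) '' A)
    rw [hSeq] at this
    exact tendsto_nhds_unique this (hμtend A)
end

section
/- A nontrivial free group F on at least two generators is not inner amenable: there is no conjugation-invariant finitely additive probability measure on F \ {1}. -/
open Filter Topology

namespace NIAhelper

set_option linter.unusedSectionVars false

open FreeGroup

variable {α : Type*} [DecidableEq α]


variable {α : Type*} [DecidableEq α]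

lemma myreduce_cons {z : α × Bool} {w : List (α × Bool)}
    (hw : FreeGroup.reduce w = w) (hh : w.head? ≠ some (z.1, !z.2)) :
    FreeGroup.reduce (z :: w) = z :: w := by
  rw [FreeGroup.reduce.cons, hw]
  cases w with
  | nil => rfl
  | cons y ys =>
    simp only []
    rw [if_neg]
    rintro ⟨h1, h2⟩
    apply hh
    simp only [List.head?_cons, Option.some_inj]
    have : y = (z.1, !z.2) := by
      obtain ⟨y1, y2⟩ := y
      obtain ⟨z1, z2⟩ := z
      simp_all
    rw [this]

lemma myreduce_concat {z : α × Bool} {w : List (α × Bool)}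
    (hw : FreeGroup.reduce w = w) (hl : w.getLast? ≠ some (z.1, !z.2)) :
    FreeGroup.reduce (w ++ [z]) = w ++ [z] := by
  apply FreeGroup.invRev_injective
  rw [← FreeGroup.reduce_invRev]
  have h1 : FreeGroup.invRev (w ++ [z]) = (z.1, !z.2) :: FreeGroup.invRev w := by
    simp [FreeGroup.invRev]
  rw [h1]
  apply myreduce_cons
  · rw [FreeGroup.reduce_invRev, hw]
  · simp only [Bool.not_not]
    intro hc
    apply hl
    have : (FreeGroup.invRev w).head? = (w.getLast?).map (fun p => (p.1, !p.2)) := by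
      simp [FreeGroup.invRev, List.head?_reverse, List.getLast?_map]
    rw [this] at hc
    obtain ⟨p, hp, hpe⟩ := Option.map_eq_some_iff.mp hc
    rw [hp]
    obtain ⟨p1, p2⟩ := p
    obtain ⟨z1, z2⟩ := z
    simp_all

lemma conj_toWord {z : α × Bool} {g : FreeGroup α} (hg : g ≠ 1)
    (hh : g.toWord.head? ≠ some (z.1, !z.2)) (hl : g.toWord.getLast? ≠ some z) :
    (FreeGroup.mk [z] * g * (FreeGroup.mk [z])⁻¹).toWord
      = z :: g.toWord ++ [(z.1, !z.2)] := by
  conv_lhs => rw [← FreeGroup.mk_toWord (x := g)]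
  rw [FreeGroup.inv_mk, FreeGroup.mul_mk, FreeGroup.mul_mk]
  have hinv : FreeGroup.invRev [z] = [(z.1, !z.2)] := by simp [FreeGroup.invRev]
  rw [hinv, FreeGroup.toWord_mk]
  have hne : g.toWord ≠ [] := by
    simpa [FreeGroup.toWord_eq_nil_iff] using hg
  have h2 : FreeGroup.reduce (g.toWord ++ [(z.1, !z.2)]) = g.toWord ++ [(z.1, !z.2)] := by
    apply myreduce_concat (FreeGroup.reduce_toWord g)
    simpa using hl
  have h3 : FreeGroup.reduce (z :: (g.toWord ++ [(z.1, !z.2)])) = z :: (g.toWord ++ [(z.1, !z.2)]) := by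
    apply myreduce_cons h2
    rw [List.head?_append_of_ne_nil _ hne]
    exact hh
  simpa using h3

variable (m : ConjInvMean (FreeGroup α))

lemma my_mono {A B : Set (FreeGroup α)} (hAB : A ⊆ B) (hB : B ⊆ {g | g ≠ 1}) :
    m.μ A ≤ m.μ B := by
  have hA : A ⊆ {g | g ≠ 1} := hAB.trans hB
  have hd : Disjoint A (B \ A) := disjoint_sdiff_self_right
  have := m.additive A (B \ A) hA ((Set.diff_subset).trans hB) hd
  rw [Set.union_diff_cancel hAB] at this
  nlinarith [m.nonneg (B \ A) ((Set.diff_subset).trans hB)]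

lemma my_subadd {A B : Set (FreeGroup α)} (hA : A ⊆ {g | g ≠ 1}) (hB : B ⊆ {g | g ≠ 1}) :
    m.μ (A ∪ B) ≤ m.μ A + m.μ B := by
  have h1 : A ∪ B = A ∪ (B \ A) := by rw [Set.union_diff_self]
  rw [h1, m.additive A (B \ A) hA ((Set.diff_subset).trans hB) disjoint_sdiff_self_right]
  have := my_mono m (Set.diff_subset (s := B) (t := A)) hB
  linarith

/-- The "killed" set for letter `z`. -/
def Kz (z : α × Bool) : Set (FreeGroup α) :=
  {g | g ≠ 1 ∧ g.toWord.head? ≠ some (z.1, !z.2) ∧ g.toWord.getLast? ≠ some z ∧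
    ¬(g.toWord.head? = some z ∧ g.toWord.getLast? = some (z.1, !z.2))}

lemma Kz_sub (z : α × Bool) : Kz z ⊆ {g : FreeGroup α | g ≠ 1} := fun g hg => hg.1

lemma kill (z : α × Bool) : m.μ (Kz z) = 0 := by
  set S : Set (FreeGroup α) :=
    {g | g.toWord.head? = some z ∧ g.toWord.getLast? = some (z.1, !z.2)} with hS
  set T : Set (FreeGroup α) :=
    {g | g ≠ 1 ∧ g.toWord.head? ≠ some (z.1, !z.2) ∧ g.toWord.getLast? ≠ some z} with hT
  have hSΩ : S ⊆ {g : FreeGroup α | g ≠ 1} := by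
    rintro g ⟨h1, _⟩
    intro hg1
    rw [hg1, FreeGroup.toWord_one] at h1
    simp at h1
  have hTΩ : T ⊆ {g : FreeGroup α | g ≠ 1} := fun g hg => hg.1
  have hzz : z ≠ (z.1, !z.2) := by
    obtain ⟨z1, z2⟩ := z; simp
  have hST : S ⊆ T := by
    rintro g ⟨h1, h2⟩
    refine ⟨fun hg1 => by rw [hg1, FreeGroup.toWord_one] at h1; simp at h1, ?_, ?_⟩
    · rw [h1]; simpa using hzz
    · rw [h2]; simpa using hzz.symm
  have himg : (fun x => FreeGroup.mk [z] * x * (FreeGroup.mk [z])⁻¹) '' T ⊆ S := by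
    rintro _ ⟨g, ⟨hg1, hgh, hgl⟩, rfl⟩
    constructor
    · rw [conj_toWord hg1 hgh hgl]; rfl
    · rw [conj_toWord hg1 hgh hgl]
      exact List.getLast?_concat
  have h1 : m.μ T ≤ m.μ S := by
    rw [← m.conj_inv (FreeGroup.mk [z]) T hTΩ]
    exact my_mono m himg hSΩ
  have hdisj : Disjoint (Kz z) S := by
    rw [Set.disjoint_left]
    rintro g ⟨_, _, _, hK4⟩ hgS
    exact hK4 hgS
  have hsub : Kz z ∪ S ⊆ T := by
    rintro g (hg | hg)
    · exact ⟨hg.1, hg.2.1, hg.2.2.1⟩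
    · exact hST hg
  have h2 : m.μ (Kz z) + m.μ S ≤ m.μ T :=
    (m.additive (Kz z) S (Kz_sub z) hSΩ hdisj) ▸ my_mono m hsub hTΩ
  have h3 := m.nonneg (Kz z) (Kz_sub z)
  linarith

lemma mem_Kz {g : FreeGroup α} (hg : g ≠ 1) {x y z : α × Bool}
    (hx : g.toWord.head? = some x) (hy : g.toWord.getLast? = some y)
    (h1 : x ≠ (z.1, !z.2)) (h2 : y ≠ z) (h3 : ¬(x = z ∧ y = (z.1, !z.2))) :
    g ∈ Kz z := by
  refine ⟨hg, ?_, ?_, ?_⟩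
  · rw [hx]; simpa using h1
  · rw [hy]; simpa using h2
  · rw [hx, hy]; simpa using h3

lemma cover (a b : α) (hab : a ≠ b) :
    {g : FreeGroup α | g ≠ 1} ⊆
      Kz (a, true) ∪ Kz (a, false) ∪ Kz (b, true) ∪ Kz (b, false) := by
  intro g hg
  have hne : g.toWord ≠ [] := by simpa [FreeGroup.toWord_eq_nil_iff] using hg
  set x := g.toWord.head hne with hxdef
  set y := g.toWord.getLast hne with hydef
  have hx : g.toWord.head? = some x := List.head?_eq_head hne
  have hy : g.toWord.getLast? = some y := List.getLast?_eq_getLast hne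
  by_cases hya : y.1 = a
  · by_cases hxb : x = (b, true)
    · refine Or.inl (Or.inr (mem_Kz hg hx hy ?_ ?_ ?_))
      · rw [hxb]; simp
      · intro h; rw [h] at hya; exact hab hya.symm
      · rintro ⟨-, h⟩; rw [h] at hya; exact hab hya.symm
    · refine Or.inr (mem_Kz hg hx hy ?_ ?_ ?_)
      · simpa using hxb
      · intro h; rw [h] at hya; exact hab hya.symm
      · rintro ⟨-, h⟩; rw [h] at hya; exact hab hya.symm
  · by_cases hxa : x = (a, true)
    · refine Or.inl (Or.inl (Or.inl (mem_Kz hg hx hy ?_ ?_ ?_)))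
      · rw [hxa]; simp
      · intro h; rw [h] at hya; exact hya rfl
      · rintro ⟨-, h⟩; rw [h] at hya; exact hya rfl
    · refine Or.inl (Or.inl (Or.inr (mem_Kz hg hx hy ?_ ?_ ?_)))
      · simpa using hxa
      · intro h; rw [h] at hya; exact hya rfl
      · rintro ⟨-, h⟩; rw [h] at hya; exact hya rfl


end NIAhelper

/-- A free group on at least two generators is not inner amenable. -/
theorem stmt_9 {α : Type*} (a b : α) (hab : a ≠ b) :
    IsEmpty (ConjInvMean (FreeGroup α)) := by
  constructor
  intro m
  letI : DecidableEq α := Classical.decEq α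
  have hKsub := fun z => NIAhelper.Kz_sub (α := α) z
  set K1 := NIAhelper.Kz (α := α) (a, true)
  set K2 := NIAhelper.Kz (α := α) (a, false)
  set K3 := NIAhelper.Kz (α := α) (b, true)
  set K4 := NIAhelper.Kz (α := α) (b, false)
  have h12 : K1 ∪ K2 ⊆ {g : FreeGroup α | g ≠ 1} := Set.union_subset (hKsub _) (hKsub _)
  have h123 : K1 ∪ K2 ∪ K3 ⊆ {g : FreeGroup α | g ≠ 1} := Set.union_subset h12 (hKsub _)
  have h1234 : K1 ∪ K2 ∪ K3 ∪ K4 ⊆ {g : FreeGroup α | g ≠ 1} :=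
    Set.union_subset h123 (hKsub _)
  have hU : {g : FreeGroup α | g ≠ 1} = K1 ∪ K2 ∪ K3 ∪ K4 :=
    subset_antisymm (NIAhelper.cover a b hab) h1234
  have e1 : m.μ (K1 ∪ K2 ∪ K3 ∪ K4) ≤ m.μ (K1 ∪ K2 ∪ K3) + m.μ K4 :=
    NIAhelper.my_subadd m h123 (hKsub _)
  have e2 : m.μ (K1 ∪ K2 ∪ K3) ≤ m.μ (K1 ∪ K2) + m.μ K3 :=
    NIAhelper.my_subadd m h12 (hKsub _)
  have e3 : m.μ (K1 ∪ K2) ≤ m.μ K1 + m.μ K2 :=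
    NIAhelper.my_subadd m (hKsub _) (hKsub _)
  have k1 := NIAhelper.kill m (a, true)
  have k2 := NIAhelper.kill m (a, false)
  have k3 := NIAhelper.kill m (b, true)
  have k4 := NIAhelper.kill m (b, false)
  have ht := m.total
  rw [hU] at ht
  simp only [K1, K2, K3, K4] at *
  linarith
end
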